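/- Let K ⊆ ℝⁿ be a convex polyhedron and let h₁, h₂ be affine functions with hyperplanes H₁ = {h₁=0}, H₂ = {h₂=0}. If K ∩ H₁ ⊆ {h₂ > 0}, then there exists ε > 0 such that K ∩ {−ε ≤ h₁ ≤ ε} ⊆ {h₂ > 0}. -/

import Mathlib

noncomputable section

/-- `y ↦ Fin.cons 0 y` as a linear map. -/
def consL (N : ℕ) : (Fin N → ℝ) →ₗ[ℝ] (Fin (N + 1) → ℝ) where
  toFun y := Fin.cons 0 y
  map_add' y z := by
    ext i
    refine Fin.cases ?_ ?_ i <;> simp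
  map_smul' a y := by
    ext i
    refine Fin.cases ?_ ?_ i <;> simp

lemma cons_eq_smul_add (N : ℕ) (s : ℝ) (y : Fin N → ℝ) :
    (Fin.cons s y : Fin (N+1) → ℝ) = s • (Pi.single (0 : Fin (N + 1)) (1 : ℝ) : Fin (N+1) → ℝ) + (Fin.cons 0 y : Fin (N+1) → ℝ) := by
  ext i
  refine Fin.cases ?_ ?_ i
  · simp
  · intro j
    simp [Pi.single_apply, Fin.succ_ne_zero]

lemma affine_cons_decomp {N : ℕ} (F : (Fin (N + 1) → ℝ) →ᵃ[ℝ] ℝ) (s : ℝ) (y : Fin N → ℝ) :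
    F (Fin.cons s y) = s * F.linear (Pi.single 0 1) + F (Fin.cons 0 y) := by
  rw [cons_eq_smul_add]
  have h := F.map_vadd (Fin.cons 0 y) (s • (Pi.single (0 : Fin (N+1)) (1:ℝ) : Fin (N+1) → ℝ))
  rw [vadd_eq_add] at h
  rw [h, map_smul, vadd_eq_add, smul_eq_mul]

lemma elim_step {N : ℕ} {ι : Type} [Fintype ι] (F : ι → ((Fin (N + 1) → ℝ) →ᵃ[ℝ] ℝ)) :
    ∃ (ι' : Type) (_ : Fintype ι') (G : ι' → ((Fin N → ℝ) →ᵃ[ℝ] ℝ)),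
      ∀ y : Fin N → ℝ, (∀ j, 0 ≤ G j y) ↔ ∃ s : ℝ, ∀ i, 0 ≤ F i (Fin.cons s y) := by
  classical
  set c : ι → ℝ := fun i => (F i).linear (Pi.single 0 1) with hc
  set g : ι → ((Fin N → ℝ) →ᵃ[ℝ] ℝ) := fun i => (F i).comp (consL N).toAffineMap with hg
  have key : ∀ (i : ι) (s : ℝ) (y : Fin N → ℝ), F i (Fin.cons s y) = s * c i + g i y :=
    fun i s y => affine_cons_decomp (F i) s y
  refine ⟨{i // c i = 0} ⊕ ({i // 0 < c i} × {j // c j < 0}), inferInstance,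
    Sum.elim (fun i => g i.1) (fun p => c p.1.1 • g p.2.1 - c p.2.1 • g p.1.1), fun y => ?_⟩
  constructor
  · intro h
    set S : Finset ι := Finset.univ.filter (fun i => 0 < c i) with hS
    set T : Finset ι := Finset.univ.filter (fun i => c i < 0) with hT
    by_cases hSne : S.Nonempty
    · refine ⟨S.sup' hSne (fun i => -(g i y) / c i), fun i => ?_⟩
      rw [key]
      rcases lt_trichotomy (c i) 0 with hci | hci | hci
      · -- c i < 0 : need sup' ≤ -(g i y)/c i
        have hb : ∀ j ∈ S, -(g j y) / c j ≤ -(g i y) / c i := by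
          intro j hj
          have hcj : 0 < c j := by simpa [hS] using hj
          have hpair := h (Sum.inr ⟨⟨j, hcj⟩, ⟨i, hci⟩⟩)
          simp only [Sum.elim_inr, AffineMap.coe_sub, AffineMap.coe_smul, Pi.sub_apply,
            Pi.smul_apply, smul_eq_mul] at hpair
          have h2 : -(g i y) / c i = g i y / (-(c i)) := by
            rw [neg_div, div_neg]
          rw [h2, div_le_div_iff₀ hcj (by linarith)]
          nlinarith
        have hs := Finset.sup'_le hSne (fun i => -(g i y) / c i) hb
        have hne : c i ≠ 0 := ne_of_lt hci
        have h3 : c i * (-(g i y) / c i) ≤ c i * (S.sup' hSne (fun i => -(g i y) / c i)) :=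
          mul_le_mul_of_nonpos_left hs (le_of_lt hci)
        have h4 : c i * (-(g i y) / c i) = -(g i y) := by field_simp
        linarith
      · have h0 := h (Sum.inl ⟨i, hci⟩)
        simp only [Sum.elim_inl] at h0
        rw [hci]
        linarith
      · have hiS : i ∈ S := by simp [hS, hci]
        have hs := Finset.le_sup' (fun i => -(g i y) / c i) hiS
        have hne : c i ≠ 0 := ne_of_gt hci
        have h3 : c i * (-(g i y) / c i) ≤ c i * (S.sup' hSne (fun i => -(g i y) / c i)) :=
          mul_le_mul_of_nonneg_left hs (le_of_lt hci)
        have h4 : c i * (-(g i y) / c i) = -(g i y) := by field_simp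
        linarith
    · by_cases hTne : T.Nonempty
      · refine ⟨T.inf' hTne (fun i => -(g i y) / c i), fun i => ?_⟩
        rw [key]
        rcases lt_trichotomy (c i) 0 with hci | hci | hci
        · have hiT : i ∈ T := by simp [hT, hci]
          have hs := Finset.inf'_le (fun i => -(g i y) / c i) hiT
          have hne : c i ≠ 0 := ne_of_lt hci
          have h3 : c i * (-(g i y) / c i) ≤ c i * (T.inf' hTne (fun i => -(g i y) / c i)) :=
            mul_le_mul_of_nonpos_left hs (le_of_lt hci)
          have h4 : c i * (-(g i y) / c i) = -(g i y) := by field_simp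
          linarith
        · have h0 := h (Sum.inl ⟨i, hci⟩)
          simp only [Sum.elim_inl] at h0
          rw [hci]
          linarith
        · exact absurd (by simp [hS, hci] : i ∈ S) (fun hmem => hSne ⟨i, hmem⟩)
      · refine ⟨0, fun i => ?_⟩
        rw [key]
        rcases lt_trichotomy (c i) 0 with hci | hci | hci
        · exact absurd (by simp [hT, hci] : i ∈ T) (fun hmem => hTne ⟨i, hmem⟩)
        · have h0 := h (Sum.inl ⟨i, hci⟩)
          simp only [Sum.elim_inl] at h0
          rw [hci]
          linarith
        · exact absurd (by simp [hS, hci] : i ∈ S) (fun hmem => hSne ⟨i, hmem⟩)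
  · rintro ⟨s, hs⟩ j
    have hs' : ∀ i, 0 ≤ s * c i + g i y := fun i => by rw [← key]; exact hs i
    rcases j with ⟨i, hci⟩ | ⟨⟨i, hci⟩, ⟨j, hcj⟩⟩
    · have := hs' i
      simp only [Sum.elim_inl]
      rw [hci] at this
      linarith
    · simp only [Sum.elim_inr, AffineMap.coe_sub, AffineMap.coe_smul, Pi.sub_apply,
        Pi.smul_apply, smul_eq_mul]
      nlinarith [hs' i, hs' j, mul_nonneg (le_of_lt hci) (hs' j),
        mul_nonneg (neg_nonneg.2 (le_of_lt hcj)) (hs' i)]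

lemma elim_all : ∀ (k : ℕ) {ι : Type} [Fintype ι] (F : ι → ((Fin (k + 1) → ℝ) →ᵃ[ℝ] ℝ)),
    ∃ (ι' : Type) (_ : Fintype ι') (c b : ι' → ℝ),
      ∀ t : ℝ, (∀ j, 0 ≤ c j * t + b j) ↔
        ∃ z : Fin (k + 1) → ℝ, z (Fin.last k) = t ∧ ∀ i, 0 ≤ F i z := by
  intro k
  induction k with
  | zero =>
    intro ι _ F
    refine ⟨ι, inferInstance, fun i => (F i).linear (fun _ => 1), fun i => F i 0, fun t => ?_⟩
    have hval : ∀ (i : ι) (z : Fin 1 → ℝ),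
        F i z = z (Fin.last 0) * (F i).linear (fun _ => 1) + F i 0 := by
      intro i z
      have hz : z = (z (Fin.last 0)) • (fun _ => (1 : ℝ)) + 0 := by
        funext j
        have : j = Fin.last 0 := Subsingleton.elim _ _
        simp [this]
      conv_lhs => rw [hz]
      have h := (F i).map_vadd (0 : Fin 1 → ℝ) ((z (Fin.last 0)) • (fun _ => (1 : ℝ)))
      rw [vadd_eq_add] at h
      rw [h, map_smul, vadd_eq_add, smul_eq_mul]
    constructor
    · intro h
      refine ⟨fun _ => t, by simp, fun i => ?_⟩
      rw [hval]
      have := h i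
      simp only at this
      linarith
    · rintro ⟨z, hzt, hz⟩ j
      have := hz j
      rw [hval, hzt] at this
      simp only
      linarith
  | succ k ih =>
    intro ι _ F
    obtain ⟨ι₁, _, G, hG⟩ := elim_step F
    obtain ⟨ι', _, c, b, hcb⟩ := ih G
    refine ⟨ι', inferInstance, c, b, fun t => ?_⟩
    rw [hcb]
    constructor
    · rintro ⟨y, hyt, hy⟩
      obtain ⟨s, hs⟩ := (hG y).1 hy
      refine ⟨Fin.cons s y, ?_, hs⟩
      rw [← Fin.succ_last, Fin.cons_succ]
      exact hyt
    · rintro ⟨z, hzt, hz⟩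
      refine ⟨Fin.tail z, ?_, (hG (Fin.tail z)).2 ⟨z 0, ?_⟩⟩
      · show z ((Fin.last k).succ) = t
        rw [Fin.succ_last]
        exact hzt
      · rwa [Fin.cons_self_tail]

lemma image_closed (n : ℕ) {ι : Type} [Fintype ι]
    (F : ι → ((Fin (n + 1) → ℝ) →ᵃ[ℝ] ℝ)) :
    IsClosed {t : ℝ | ∃ z : Fin (n + 1) → ℝ, z (Fin.last n) = t ∧ ∀ i, 0 ≤ F i z} := by
  obtain ⟨ι', _, c, b, hcb⟩ := elim_all n F
  have hset : {t : ℝ | ∃ z : Fin (n + 1) → ℝ, z (Fin.last n) = t ∧ ∀ i, 0 ≤ F i z}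
      = ⋂ j, {t | 0 ≤ c j * t + b j} := by
    ext t
    simp only [Set.mem_iInter, Set.mem_setOf_eq]
    exact ((hcb t).symm)
  rw [hset]
  exact isClosed_iInter fun j => isClosed_le continuous_const (by fun_prop)

theorem stmt7 (n m : ℕ) (f : Fin m → (EuclideanSpace ℝ (Fin n) →ᵃ[ℝ] ℝ))
    (K : Set (EuclideanSpace ℝ (Fin n))) (hK : K = {x | ∀ i, 0 ≤ f i x})
    (h₁ h₂ : EuclideanSpace ℝ (Fin n) →ᵃ[ℝ] ℝ)
    (hsep : ∀ x ∈ K, h₁ x = 0 → 0 < h₂ x) :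
    ∃ ε > 0, ∀ x ∈ K, -ε ≤ h₁ x → h₁ x ≤ ε → 0 < h₂ x := by
  classical
  let eqE : (Fin n → ℝ) ≃ₗ[ℝ] EuclideanSpace ℝ (Fin n) :=
    (WithLp.linearEquiv 2 ℝ (Fin n → ℝ)).symm
  let initL : (Fin (n + 1) → ℝ) →ₗ[ℝ] (Fin n → ℝ) := LinearMap.funLeft ℝ ℝ Fin.castSucc
  let ρ : (Fin (n + 1) → ℝ) →ᵃ[ℝ] EuclideanSpace ℝ (Fin n) :=
    (eqE.toLinearMap.comp initL).toAffineMap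
  let π : (Fin (n + 1) → ℝ) →ᵃ[ℝ] ℝ := (LinearMap.proj (Fin.last n)).toAffineMap
  let F : (Fin m ⊕ Fin 3) → ((Fin (n + 1) → ℝ) →ᵃ[ℝ] ℝ) :=
    Sum.elim (fun i => (f i).comp ρ) ![-(h₂.comp ρ), π - h₁.comp ρ, h₁.comp ρ - π]
  have hF0 : ∀ z, F (Sum.inr 0) z = -(h₂ (ρ z)) := fun z => rfl
  have hF1 : ∀ z, F (Sum.inr 1) z = π z - h₁ (ρ z) := fun z => rfl
  have hF2 : ∀ z, F (Sum.inr 2) z = h₁ (ρ z) - π z := fun z => rfl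
  have hFl : ∀ i z, F (Sum.inl i) z = f i (ρ z) := fun i z => rfl
  have hπ : ∀ z, π z = z (Fin.last n) := fun z => rfl
  set S : Set ℝ := {t : ℝ | ∃ z : Fin (n + 1) → ℝ, z (Fin.last n) = t ∧ ∀ i, 0 ≤ F i z}
    with hSdef
  have hSchar : ∀ t : ℝ,
      t ∈ S ↔ ∃ x : EuclideanSpace ℝ (Fin n), (∀ i, 0 ≤ f i x) ∧ h₂ x ≤ 0 ∧ h₁ x = t := by
    intro t
    constructor
    · rintro ⟨z, hzt, hz⟩
      have h0 := hz (Sum.inr 0); rw [hF0] at h0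
      have h1' := hz (Sum.inr 1); rw [hF1, hπ, hzt] at h1'
      have h2' := hz (Sum.inr 2); rw [hF2, hπ, hzt] at h2'
      exact ⟨ρ z, fun i => by rw [← hFl i z]; exact hz (Sum.inl i), by linarith, by linarith⟩
    · rintro ⟨x, hx, hx2, hx1⟩
      refine ⟨Fin.snoc (eqE.symm x) t, Fin.snoc_last _ _, ?_⟩
      have hρ : ρ (Fin.snoc (eqE.symm x) t) = x := by
        show eqE (initL (Fin.snoc (eqE.symm x) t)) = x
        have hi : initL (Fin.snoc (eqE.symm x) t) = eqE.symm x := by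
          funext i
          have : initL (Fin.snoc (eqE.symm x) t) i
              = (Fin.snoc (eqE.symm x) t : Fin (n+1) → ℝ) i.castSucc := rfl
          rw [this, Fin.snoc_castSucc]
        rw [hi, LinearEquiv.apply_symm_apply]
      have hπ' : π (Fin.snoc (eqE.symm x) t) = t := by
        rw [hπ, Fin.snoc_last]
      rintro (i | j)
      · rw [hFl, hρ]; exact hx i
      · fin_cases j
        · show (0:ℝ) ≤ F (Sum.inr 0) (Fin.snoc (eqE.symm x) t)
          rw [hF0, hρ]; linarith
        · show (0:ℝ) ≤ F (Sum.inr 1) (Fin.snoc (eqE.symm x) t)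
          rw [hF1, hρ, hπ', hx1]; linarith
        · show (0:ℝ) ≤ F (Sum.inr 2) (Fin.snoc (eqE.symm x) t)
          rw [hF2, hρ, hπ', hx1]; linarith
  have hSclosed : IsClosed S := image_closed n F
  have h0S : (0 : ℝ) ∉ S := by
    rw [hSchar]
    rintro ⟨x, hx, hx2, hx1⟩
    have := hsep x (by rw [hK]; exact hx) hx1
    linarith
  obtain ⟨ε, hε, hball⟩ := Metric.isOpen_iff.1 hSclosed.isOpen_compl 0 h0S
  refine ⟨ε / 2, by linarith, fun x hxK hlow hup => ?_⟩
  by_contra hcon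
  push_neg at hcon
  have hxS : h₁ x ∈ S := (hSchar _).2 ⟨x, by rw [hK] at hxK; exact hxK, hcon, rfl⟩
  have hmem : h₁ x ∈ Metric.ball (0 : ℝ) ε := by
    rw [Metric.mem_ball, Real.dist_eq, sub_zero]
    rw [abs_lt]
    constructor <;> linarith
  exact hball hmem hxS
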